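/- Let 0 < f, M > 0, K > 0. Let Υ be a nonempty finite set of pairs with associated values d(a,b) ∈ [2f, M], and set u(λ) = |Υ|^{−1} Σ_{(a,b)∈Υ} e^{−λ·d(a,b)}. If 0 ≤ λ' ≤ λ ≤ K and u(λ') − u(λ) ≤ ε for some ε ≥ 0, then λ − λ' ≤ (1/(2f))·ln(1 + ε·e^{KM}). -/

import Mathlib

open Real

/-- Let `0 < f`, `M > 0`, `K > 0`, let `Υ` be a nonempty
finite set with values `d i ∈ [2f, M]` and `u(λ) = |Υ|⁻¹ Σ_i e^{-λ d i}`.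
If `0 ≤ λ' ≤ λ ≤ K` and `u(λ') - u(λ) ≤ ε` with `ε ≥ 0`, then
`λ - λ' ≤ (1/(2f)) ln(1 + ε e^{KM})`. -/
theorem scaling_factors_close_of_cluster_means_close
    (f M K : ℝ) (hf : 0 < f) (hM : 0 < M) (hK : 0 < K)
    {ι : Type*} (Υ : Finset ι) (hne : Υ.Nonempty) (d : ι → ℝ)
    (hd : ∀ i ∈ Υ, 2 * f ≤ d i ∧ d i ≤ M)
    (lam lam' ε : ℝ) (hε : 0 ≤ ε)
    (h0 : 0 ≤ lam') (h1 : lam' ≤ lam) (h2 : lam ≤ K)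
    (hclose : (Υ.card : ℝ)⁻¹ * ∑ i ∈ Υ, exp (-(lam' * d i)) -
        (Υ.card : ℝ)⁻¹ * ∑ i ∈ Υ, exp (-(lam * d i)) ≤ ε) :
    lam - lam' ≤ (1 / (2 * f)) * log (1 + ε * exp (K * M)) := by
  set δ := lam - lam' with hδdef
  have hδ0 : 0 ≤ δ := by simp [hδdef]; linarith
  have hcard : (0:ℝ) < Υ.card := by exact_mod_cast Finset.card_pos.mpr hne
  have key : ∀ i ∈ Υ, exp (-(K*M)) * (exp (2*f*δ) - 1) ≤
      exp (-(lam' * d i)) - exp (-(lam * d i)) := by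
    intro i hi
    obtain ⟨hdi1, hdi2⟩ := hd i hi
    have hdi0 : 0 ≤ d i := le_trans (by positivity) hdi1
    have e1 : exp (-(lam * d i)) * (exp (δ * d i) - 1)
        = exp (-(lam' * d i)) - exp (-(lam * d i)) := by
      rw [mul_sub, ← Real.exp_add, mul_one]
      rw [hδdef]
      ring_nf
    rw [← e1]
    have hA : exp (-(K*M)) ≤ exp (-(lam * d i)) := by
      apply Real.exp_le_exp.mpr
      have : lam * d i ≤ K * M := by nlinarith
      linarith
    have hB : exp (2*f*δ) - 1 ≤ exp (δ * d i) - 1 := by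
      have := Real.exp_le_exp.mpr (show 2*f*δ ≤ δ * d i by nlinarith)
      linarith
    have h1' : 0 ≤ exp (2*f*δ) - 1 := by
      have := Real.one_le_exp (show (0:ℝ) ≤ 2*f*δ by positivity)
      linarith
    exact mul_le_mul hA hB h1' (le_of_lt (Real.exp_pos _))
  have hsum : (Υ.card : ℝ) * (exp (-(K*M)) * (exp (2*f*δ) - 1)) ≤
      ∑ i ∈ Υ, (exp (-(lam' * d i)) - exp (-(lam * d i))) := by
    calc (Υ.card : ℝ) * (exp (-(K*M)) * (exp (2*f*δ) - 1))
        = Υ.card • (exp (-(K*M)) * (exp (2*f*δ) - 1)) := by simp [nsmul_eq_mul]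
      _ ≤ _ := Finset.card_nsmul_le_sum Υ _ _ key
  rw [Finset.sum_sub_distrib] at hsum
  have hclose' : ∑ i ∈ Υ, exp (-(lam' * d i)) - ∑ i ∈ Υ, exp (-(lam * d i))
      ≤ (Υ.card : ℝ) * ε := by
    have := hclose
    rw [← mul_sub] at this
    calc _ = (Υ.card : ℝ) * ((Υ.card : ℝ)⁻¹ *
          (∑ i ∈ Υ, exp (-(lam' * d i)) - ∑ i ∈ Υ, exp (-(lam * d i)))) := by
          field_simp
      _ ≤ (Υ.card : ℝ) * ε := by
          exact mul_le_mul_of_nonneg_left this (le_of_lt hcard)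
  have hmain : exp (-(K*M)) * (exp (2*f*δ) - 1) ≤ ε := by
    have := le_trans hsum hclose'
    exact le_of_mul_le_mul_left (by linarith) hcard
  have hexp : exp (2*f*δ) ≤ 1 + ε * exp (K*M) := by
    have hpos := Real.exp_pos (K*M)
    have hmul : exp (-(K*M)) * exp (K*M) = 1 := by
      rw [← Real.exp_add]; simp
    have h := mul_le_mul_of_nonneg_right hmain hpos.le
    have h2' : exp (2*f*δ) - 1 ≤ ε * exp (K*M) := by
      calc exp (2*f*δ) - 1
          = (exp (2*f*δ) - 1) * (exp (-(K*M)) * exp (K*M)) := by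
            rw [hmul, mul_one]
        _ = exp (-(K*M)) * (exp (2*f*δ) - 1) * exp (K*M) := by ring
        _ ≤ ε * exp (K*M) := h
    linarith
  have hlog : 2*f*δ ≤ log (1 + ε * exp (K*M)) := by
    rw [Real.le_log_iff_exp_le (by positivity)]
    exact hexp
  calc δ = (1/(2*f)) * (2*f*δ) := by field_simp
    _ ≤ (1/(2*f)) * log (1 + ε * exp (K*M)) := by
        exact mul_le_mul_of_nonneg_left hlog (by positivity)
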